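/- For k ≥ 2 and k ≤ m ≤ n-1, the number of connected interval-clique graphs on {1,...,n} with k maximal cliques whose last maximal clique is [m:n] equals C(n-1, k-1)·C(m-2, k-2) − C(n-2, k-2)·C(m-1, k-1). -/

import Mathlib

namespace ICGaux

/-- strict mono from adjacent increases -/
lemma sm_of_adj {k : ℕ} {f : Fin k → ℕ}
    (h : ∀ a b : Fin k, (b : ℕ) = (a : ℕ) + 1 → f a < f b) : StrictMono f := by
  have key : ∀ d (a b : Fin k), (b : ℕ) = (a : ℕ) + d → 0 < d → f a < f b := by
    intro d
    induction d with
    | zero => omega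
    | succ e ih =>
      intro a b hb _
      rcases Nat.eq_zero_or_pos e with he | he
      · exact h a b (by omega)
      · have hek : (a : ℕ) + e < k := by have := b.isLt; omega
        exact lt_trans (ih a ⟨(a : ℕ) + e, hek⟩ (by simp) he)
          (h ⟨(a : ℕ) + e, hek⟩ b (by simp; omega))
  intro a b hab
  have hab' : (a : ℕ) < (b : ℕ) := hab
  exact key ((b : ℕ) - (a : ℕ)) a b (by omega) (by omega)

lemma card_boundedSM (r N : ℕ) :
    Nat.card {f : Fin r → ℕ // StrictMono f ∧ ∀ i, f i < N} = N.choose r := by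
  have e : {f : Fin r → ℕ // StrictMono f ∧ ∀ i, f i < N} ≃
      {s : Finset (Fin N) // s.card = r} := by
    refine
      { toFun := fun f => ⟨Finset.univ.image (fun i => (⟨f.1 i, f.2.2 i⟩ : Fin N)), ?_⟩
        invFun := fun s => ⟨fun i => (s.1.orderEmbOfFin s.2 i : ℕ), ?_, ?_⟩
        left_inv := ?_, right_inv := ?_ }
    · rw [Finset.card_image_of_injective _ (fun a b hab => f.2.1.injective (by
        simpa [Fin.mk.injEq] using hab)), Finset.card_univ, Fintype.card_fin]
    · exact fun a b hab => by
        exact_mod_cast (s.1.orderEmbOfFin s.2).strictMono hab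
    · exact fun i => (s.1.orderEmbOfFin s.2 i).isLt
    · rintro ⟨f, hf, hb⟩
      ext i
      have hmono : StrictMono (fun i => (⟨f i, hb i⟩ : Fin N)) := fun a b hab => by
        simpa [Fin.lt_def] using hf hab
      have := Finset.orderEmbOfFin_unique
        (s := Finset.univ.image (fun i => (⟨f i, hb i⟩ : Fin N)))
        (by rw [Finset.card_image_of_injective _ hmono.injective, Finset.card_univ,
          Fintype.card_fin]) (fun x => Finset.mem_image_of_mem _ (Finset.mem_univ x)) hmono
      simp only
      rw [← congrFun this i]
    · rintro ⟨s, hs⟩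
      ext : 1
      simp only
      apply Finset.coe_injective
      rw [Finset.coe_image, Finset.coe_univ, Set.image_univ]
      have hfe : (fun i => (⟨(s.orderEmbOfFin hs i : ℕ), (s.orderEmbOfFin hs i).isLt⟩ : Fin N))
          = fun i => s.orderEmbOfFin hs i := by
        funext i; exact Fin.ext rfl
      rw [hfe]
      exact Finset.range_orderEmbOfFin s hs
  rw [Nat.card_congr e, Nat.card_eq_fintype_card, Fintype.card_finset_len, Fintype.card_fin]

set_option maxHeartbeats 2000000 in
lemma cardY (k q : ℕ) (hk : 1 ≤ k) (hq : 1 ≤ q) :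
    Nat.card {y : Fin k → ℕ // StrictMono y ∧ 1 ≤ y ⟨0, by omega⟩ ∧ y ⟨k - 1, by omega⟩ = q}
      = (q - 1).choose (k - 1) := by
  rw [← card_boundedSM (k - 1) (q - 1)]
  apply Nat.card_congr
  refine
    { toFun := fun y => ⟨fun i => y.1 ⟨i, by omega⟩ - 1, ?_, ?_⟩
      invFun := fun f => ⟨fun j => if h : (j : ℕ) < k - 1 then f.1 ⟨j, h⟩ + 1 else q,
        ?_, ?_, ?_⟩
      left_inv := ?_, right_inv := ?_ }
  · -- strict mono of image
    intro a b hab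
    obtain ⟨hSM, h0, hl⟩ := y.2
    have hab' : (a : ℕ) < (b : ℕ) := hab
    have h1 : 1 ≤ y.1 ⟨(a : ℕ), by omega⟩ :=
      le_trans h0 (hSM.monotone (Fin.mk_le_mk.mpr (Nat.zero_le _)))
    have h2 : y.1 ⟨(a : ℕ), by omega⟩ < y.1 ⟨(b : ℕ), by omega⟩ :=
      hSM (Fin.mk_lt_mk.mpr hab')
    dsimp only
    omega
  · -- bound
    intro i
    obtain ⟨hSM, h0, hl⟩ := y.2
    have h1 : 1 ≤ y.1 ⟨(i : ℕ), by omega⟩ :=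
      le_trans h0 (hSM.monotone (Fin.mk_le_mk.mpr (Nat.zero_le _)))
    have h2 : y.1 ⟨(i : ℕ), by omega⟩ < y.1 ⟨k - 1, by omega⟩ :=
      hSM (Fin.mk_lt_mk.mpr (by omega))
    dsimp only
    rw [hl] at h2
    omega
  · -- strict mono of preimage
    apply sm_of_adj
    intro a b hab
    by_cases hb : (b : ℕ) < k - 1
    · have ha : (a : ℕ) < k - 1 := by omega
      rw [dif_pos hb, dif_pos ha]
      have := f.2.1 (show (⟨(a : ℕ), ha⟩ : Fin (k - 1)) < ⟨(b : ℕ), hb⟩ from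
        Fin.mk_lt_mk.mpr (by omega))
      omega
    · have ha : (a : ℕ) < k - 1 := by omega
      rw [dif_neg hb, dif_pos ha]
      have := f.2.2 ⟨(a : ℕ), ha⟩
      omega
  · -- 1 ≤ y 0
    dsimp only
    split <;> omega
  · -- last = q
    dsimp only
    rw [dif_neg (by omega)]
  · -- left_inv
    rintro ⟨y, hSM, h0, hl⟩
    apply Subtype.ext
    funext j
    dsimp only
    by_cases hj : (j : ℕ) < k - 1
    · rw [dif_pos hj]
      have h1 : 1 ≤ y ⟨(j : ℕ), by omega⟩ :=
        le_trans h0 (hSM.monotone (Fin.mk_le_mk.mpr (Nat.zero_le _)))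
      have h2 : y ⟨(j : ℕ), by omega⟩ = y j := congrArg y (Fin.ext rfl)
      omega
    · rw [dif_neg hj]
      have h2 : y j = y ⟨k - 1, by omega⟩ := congrArg y (Fin.ext (show (j:ℕ) = k - 1 by omega))
      omega
  · -- right_inv
    rintro ⟨f, hSM, hb⟩
    apply Subtype.ext
    funext i
    dsimp only
    rw [dif_pos (by exact i.isLt)]
    have h2 : f ⟨(i : ℕ), i.isLt⟩ = f i := congrArg f (Fin.ext rfl)
    omega

set_option maxHeartbeats 2000000 in
lemma cardX (k p : ℕ) (hk : 2 ≤ k) (hp : 2 ≤ p) :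
    Nat.card {x : Fin k → ℕ // StrictMono x ∧ x ⟨0, by omega⟩ = 1 ∧ x ⟨k - 1, by omega⟩ = p}
      = (p - 2).choose (k - 2) := by
  have he : (p - 1 - 1).choose (k - 1 - 1) = (p - 2).choose (k - 2) := by
    congr 1 <;> omega
  have hik : ∀ i : Fin (k - 1), (i : ℕ) + 1 < k := fun i => by omega
  have hjk : ∀ j : Fin k, 1 ≤ (j : ℕ) → (j : ℕ) - 1 < k - 1 := fun j h => by omega
  have e : {x : Fin k → ℕ // StrictMono x ∧ x ⟨0, by omega⟩ = 1 ∧ x ⟨k - 1, by omega⟩ = p} ≃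
      {y : Fin (k - 1) → ℕ // StrictMono y ∧ 1 ≤ y ⟨0, by omega⟩ ∧
        y ⟨k - 1 - 1, by omega⟩ = p - 1} := by
    refine
      { toFun := fun x => ⟨fun i => x.1 ⟨(i : ℕ) + 1, hik i⟩ - 1, ?_, ?_, ?_⟩
        invFun := fun f => ⟨fun j => if h : 1 ≤ (j : ℕ) then f.1 ⟨(j : ℕ) - 1, hjk j h⟩ + 1
          else 1, ?_, ?_, ?_⟩
        left_inv := ?_, right_inv := ?_ }
    · -- strict mono
      intro a b hab
      obtain ⟨hSM, h0, hl⟩ := x.2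
      have hab' : (a : ℕ) < (b : ℕ) := hab
      have h1 : x.1 ⟨0, by omega⟩ < x.1 ⟨(a : ℕ) + 1, by omega⟩ :=
        hSM (Fin.mk_lt_mk.mpr (by omega))
      have h2 : x.1 ⟨(a : ℕ) + 1, by omega⟩ < x.1 ⟨(b : ℕ) + 1, by omega⟩ :=
        hSM (Fin.mk_lt_mk.mpr (by omega))
      dsimp only
      omega
    · -- 1 ≤ f 0
      obtain ⟨hSM, h0, hl⟩ := x.2
      have h1 : x.1 ⟨0, by omega⟩ < x.1 ⟨(0 : ℕ) + 1, by omega⟩ :=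
        hSM (Fin.mk_lt_mk.mpr (by omega))
      dsimp only
      omega
    · -- f last = p - 1
      obtain ⟨hSM, h0, hl⟩ := x.2
      dsimp only
      have h2 : x.1 ⟨(k - 1 - 1 : ℕ) + 1, by omega⟩ = x.1 ⟨k - 1, by omega⟩ :=
        congrArg x.1 (Fin.ext (show k - 1 - 1 + 1 = k - 1 by omega))
      omega
    · -- strict mono of preimage
      apply sm_of_adj
      intro a b hab
      by_cases ha : 1 ≤ (a : ℕ)
      · rw [dif_pos ha, dif_pos (by omega)]
        have hb' : (b : ℕ) - 1 < k - 1 := by omega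
        have := f.2.1 (show (⟨(a : ℕ) - 1, by omega⟩ : Fin (k - 1)) < ⟨(b : ℕ) - 1, hb'⟩ from
          Fin.mk_lt_mk.mpr (by omega))
        omega
      · rw [dif_neg ha, dif_pos (by omega)]
        have h1 : 1 ≤ f.1 ⟨(b : ℕ) - 1, by omega⟩ :=
          le_trans f.2.2.1 (f.2.1.monotone (Fin.mk_le_mk.mpr (Nat.zero_le _)))
        omega
    · -- x 0 = 1
      dsimp only
      rw [dif_neg (by omega)]
    · -- x last = p
      dsimp only
      rw [dif_pos (by omega)]
      have h2 := f.2.2.2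
      omega
    · -- left_inv
      rintro ⟨x, hSM, h0, hl⟩
      apply Subtype.ext
      funext j
      dsimp only
      by_cases hj : 1 ≤ (j : ℕ)
      · rw [dif_pos hj]
        have h1 : x ⟨0, by omega⟩ ≤ x ⟨(j : ℕ) - 1 + 1, by omega⟩ :=
          hSM.monotone (Fin.mk_le_mk.mpr (by omega))
        have h2 : x ⟨(j : ℕ) - 1 + 1, by omega⟩ = x j := congrArg x (Fin.ext (show (j:ℕ) - 1 + 1 = (j:ℕ) by omega))
        omega
      · rw [dif_neg hj]
        have h2 : x j = x ⟨0, by omega⟩ := congrArg x (Fin.ext (show (j:ℕ) = 0 by omega))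
        omega
    · -- right_inv
      rintro ⟨f, hSM, h0, hl⟩
      apply Subtype.ext
      funext i
      dsimp only
      rw [dif_pos (by omega)]
      have h2 : f ⟨(i : ℕ) + 1 - 1, by omega⟩ = f i := congrArg f (Fin.ext (show (i:ℕ) + 1 - 1 = (i:ℕ) by omega))
      omega

  calc Nat.card {x : Fin k → ℕ // StrictMono x ∧ x ⟨0, by omega⟩ = 1 ∧
        x ⟨k - 1, by omega⟩ = p}
      = Nat.card {y : Fin (k - 1) → ℕ // StrictMono y ∧ 1 ≤ y ⟨0, by omega⟩ ∧
        y ⟨k - 1 - 1, by omega⟩ = p - 1} := Nat.card_congr e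
    _ = (p - 1 - 1).choose (k - 1 - 1) := cardY (k - 1) (p - 1) (by omega) (by omega)
    _ = (p - 2).choose (k - 2) := he
/-! ### Splice machinery -/

lemma mk_lt_iff {k : ℕ} {a : ℕ} {h : a < k} {b : Fin k} :
    (⟨a, h⟩ : Fin k) < b ↔ a < (b : ℕ) := Iff.rfl

lemma lt_mk_iff {k : ℕ} {a : ℕ} {h : a < k} {b : Fin k} :
    b < (⟨a, h⟩ : Fin k) ↔ (b : ℕ) < a := Iff.rfl

lemma mk_le_iff {k : ℕ} {a : ℕ} {h : a < k} {b : Fin k} :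
    (⟨a, h⟩ : Fin k) ≤ b ↔ a ≤ (b : ℕ) := Iff.rfl

def cross {k : ℕ} (x y : Fin k → ℕ) (j : ℕ) : Prop :=
  if h : j + 1 < k then y ⟨j, by omega⟩ < x ⟨j + 1, h⟩ else False

instance {k : ℕ} (x y : Fin k → ℕ) : DecidablePred (cross x y) := fun j => by
  unfold cross
  split <;> infer_instance

lemma cross_lt {k : ℕ} {x y : Fin k → ℕ} {j : ℕ} (hc : cross x y j) : j + 1 < k := by
  by_cases h : j + 1 < k
  · exact h
  · simp only [cross, dif_neg h] at hc

lemma cross_iff {k : ℕ} {x y : Fin k → ℕ} {j : ℕ} (h : j + 1 < k) :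
    cross x y j ↔ y ⟨j, by omega⟩ < x ⟨j + 1, h⟩ := by
  simp only [cross, dif_pos h]

def splice {k : ℕ} (x y : Fin k → ℕ) (i : ℕ) : Fin k → ℕ :=
  fun j => if (j : ℕ) ≤ i then x j else y j

lemma splice_le {k : ℕ} {x y : Fin k → ℕ} {i : ℕ} {j : Fin k} (h : (j : ℕ) ≤ i) :
    splice x y i j = x j := if_pos h

lemma splice_gt {k : ℕ} {x y : Fin k → ℕ} {i : ℕ} {j : Fin k} (h : ¬ (j : ℕ) ≤ i) :
    splice x y i j = y j := if_neg h

section FindLemmas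

variable {k : ℕ} {x y : Fin k → ℕ} (hx : StrictMono x) (hy : StrictMono y)
  (hex : ∃ j, cross x y j)

lemma find_lt : Nat.find hex + 1 < k := cross_lt (Nat.find_spec hex)

lemma find_cross : y ⟨Nat.find hex, by have := cross_lt (Nat.find_spec hex); omega⟩ <
    x ⟨Nat.find hex + 1, cross_lt (Nat.find_spec hex)⟩ :=
  (cross_iff (cross_lt (Nat.find_spec hex))).mp (Nat.find_spec hex)

lemma find_min' {j : ℕ} (hj : j < Nat.find hex) (h : j + 1 < k) :
    x ⟨j + 1, h⟩ ≤ y ⟨j, by omega⟩ := by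
  have := Nat.find_min hex hj
  rw [cross_iff h] at this
  omega

include hx hy in
lemma splice_sm1 (hxy : x ⟨0, by have := cross_lt (Nat.find_spec hex); omega⟩ ≤
      y ⟨0, by have := cross_lt (Nat.find_spec hex); omega⟩) :
    StrictMono (splice x y (Nat.find hex)) := by
  have hik : Nat.find hex + 1 < k := find_lt hex
  have hcr := find_cross hex
  set i := Nat.find hex with hi
  apply sm_of_adj
  intro a b hab
  by_cases hbi : (b : ℕ) ≤ i
  · rw [splice_le (show (a : ℕ) ≤ i by omega), splice_le hbi]
    exact hx (show a < b from by rw [Fin.lt_def]; omega)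
  · by_cases hai : (a : ℕ) ≤ i
    · have hai' : (a : ℕ) = i := by omega
      rw [splice_le hai, splice_gt hbi]
      rcases Nat.eq_zero_or_pos i with h0 | h0
      · have e1 : x a = x ⟨0, by omega⟩ := congrArg x (Fin.ext (show (a : ℕ) = 0 by omega))
        have e2 : y ⟨0, by omega⟩ < y ⟨(b : ℕ), b.isLt⟩ := hy (Fin.mk_lt_mk.mpr (by omega))
        have e3 : y ⟨(b : ℕ), b.isLt⟩ = y b := congrArg y (Fin.ext rfl)
        omega
      · have hm := find_min' hex (show i - 1 < i by omega) (show i - 1 + 1 < k by omega)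
        have e1 : x a = x ⟨i - 1 + 1, by omega⟩ := congrArg x (Fin.ext (show (a : ℕ) = i - 1 + 1 by omega))
        have e2 : y ⟨i - 1, by omega⟩ < y ⟨(b : ℕ), b.isLt⟩ := hy (Fin.mk_lt_mk.mpr (by omega))
        have e3 : y ⟨(b : ℕ), b.isLt⟩ = y b := congrArg y (Fin.ext rfl)
        omega
    · rw [splice_gt hai, splice_gt hbi]
      exact hy (show a < b from by rw [Fin.lt_def]; omega)

include hx hy in
lemma splice_sm2 : StrictMono (splice y x (Nat.find hex)) := by
  set i := Nat.find hex with hi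
  have hik : i + 1 < k := find_lt hex
  have hcr : y ⟨i, by omega⟩ < x ⟨i + 1, by omega⟩ := find_cross hex
  apply sm_of_adj
  intro a b hab
  by_cases hbi : (b : ℕ) ≤ i
  · rw [splice_le (show (a : ℕ) ≤ i by omega), splice_le hbi]
    exact hy (show a < b from by rw [Fin.lt_def]; omega)
  · by_cases hai : (a : ℕ) ≤ i
    · have hai' : (a : ℕ) = i := by omega
      rw [splice_le hai, splice_gt hbi]
      have e1 : y a = y ⟨i, by omega⟩ := congrArg y (Fin.ext (show (a : ℕ) = i by omega))
      have e2 : x ⟨i + 1, by omega⟩ ≤ x ⟨(b : ℕ), b.isLt⟩ := hx.monotone (Fin.mk_le_mk.mpr (by omega))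
      have e3 : x ⟨(b : ℕ), b.isLt⟩ = x b := congrArg x (Fin.ext rfl)
      omega
    · rw [splice_gt hai, splice_gt hbi]
      exact hx (show a < b from by rw [Fin.lt_def]; omega)

include hy in
lemma splice_cross : cross (splice x y (Nat.find hex)) (splice y x (Nat.find hex))
    (Nat.find hex) := by
  have hik : Nat.find hex + 1 < k := find_lt hex
  set i := Nat.find hex with hi
  rw [cross_iff hik]
  rw [splice_le (j := (⟨i, by omega⟩ : Fin k)) (show (i : ℕ) ≤ i from le_refl i),
    splice_gt (j := (⟨i + 1, hik⟩ : Fin k)) (show ¬ (i + 1 ≤ i) by omega)]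
  exact hy (Fin.mk_lt_mk.mpr (by omega))

lemma splice_cross_min {j : ℕ} (hj : j < Nat.find hex) :
    ¬ cross (splice x y (Nat.find hex)) (splice y x (Nat.find hex)) j := by
  have hik : Nat.find hex + 1 < k := find_lt hex
  have hmin := Nat.find_min hex hj
  set i := Nat.find hex with hi
  intro hc
  have h : j + 1 < k := cross_lt hc
  rw [cross_iff h] at hc
  rw [splice_le (x := y) (y := x) (j := (⟨j, by omega⟩ : Fin k)) (Nat.le_of_lt hj),
    splice_le (x := x) (y := y) (j := (⟨j + 1, h⟩ : Fin k))
      (show j + 1 ≤ i by omega)] at hc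
  exact hmin ((cross_iff h).mpr hc)

include hy in
lemma splice_find_eq (hex2 : ∃ j, cross (splice x y (Nat.find hex))
      (splice y x (Nat.find hex)) j) :
    Nat.find hex2 = Nat.find hex := by
  refine le_antisymm (Nat.find_le (splice_cross hy hex)) ?_
  by_contra h
  push_neg at h
  exact splice_cross_min hex h (Nat.find_spec hex2)

lemma splice_splice1 : splice (splice x y (Nat.find hex)) (splice y x (Nat.find hex))
    (Nat.find hex) = x := by
  funext j
  by_cases hj : (j : ℕ) ≤ Nat.find hex
  · rw [splice_le hj, splice_le hj]
  · rw [splice_gt hj, splice_gt hj]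

lemma splice_splice2 : splice (splice y x (Nat.find hex)) (splice x y (Nat.find hex))
    (Nat.find hex) = y := by
  funext j
  by_cases hj : (j : ℕ) ≤ Nat.find hex
  · rw [splice_le hj, splice_le hj]
  · rw [splice_gt hj, splice_gt hj]

end FindLemmas

/-! ### Assembly -/

def Ppred (k p q : ℕ) (hk : 2 ≤ k) (pr : (Fin k → ℕ) × (Fin k → ℕ)) : Prop :=
  (StrictMono pr.1 ∧ pr.1 ⟨0, by omega⟩ = 1 ∧ pr.1 ⟨k - 1, by omega⟩ = p) ∧
  (StrictMono pr.2 ∧ 1 ≤ pr.2 ⟨0, by omega⟩ ∧ pr.2 ⟨k - 1, by omega⟩ = q)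

lemma cardPair (k p q : ℕ) (hk : 2 ≤ k) (hp : 2 ≤ p) (hq : 1 ≤ q) :
    Nat.card {pr : (Fin k → ℕ) × (Fin k → ℕ) // Ppred k p q hk pr}
      = (p - 2).choose (k - 2) * ((q - 1).choose (k - 1)) := by
  have e : {pr : (Fin k → ℕ) × (Fin k → ℕ) // Ppred k p q hk pr} ≃
      {x : Fin k → ℕ // StrictMono x ∧ x ⟨0, by omega⟩ = 1 ∧ x ⟨k - 1, by omega⟩ = p} ×
      {y : Fin k → ℕ // StrictMono y ∧ 1 ≤ y ⟨0, by omega⟩ ∧ y ⟨k - 1, by omega⟩ = q} :=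
    { toFun := fun t => (⟨t.1.1, t.2.1⟩, ⟨t.1.2, t.2.2⟩)
      invFun := fun t => ⟨(t.1.1, t.2.1), t.1.2, t.2.2⟩
      left_inv := fun t => rfl
      right_inv := fun t => rfl }
  rw [Nat.card_congr e, Nat.card_prod, cardX k p hk hp, cardY k q (by omega) hq]

lemma finite_pairs (k n : ℕ) (C : ((Fin k → ℕ) × (Fin k → ℕ)) → Prop)
    (hC : ∀ pr, C pr → (∀ i, pr.1 i ≤ n) ∧ (∀ i, pr.2 i ≤ n)) :
    Finite {pr // C pr} := by
  refine Finite.of_injective (β := (Fin k → Fin (n + 1)) × (Fin k → Fin (n + 1)))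
    (fun t => (fun i => ⟨t.1.1 i, by have := (hC t.1 t.2).1 i; omega⟩,
               fun i => ⟨t.1.2 i, by have := (hC t.1 t.2).2 i; omega⟩)) ?_
  intro t1 t2 h
  have h1 := congrArg Prod.fst h
  have h2 := congrArg Prod.snd h
  simp only at h1 h2
  apply Subtype.ext
  apply Prod.ext
  · funext i
    have := congrFun h1 i
    simpa [Fin.mk.injEq] using this
  · funext i
    have := congrFun h2 i
    simpa [Fin.mk.injEq] using this

lemma split2 {α : Type*} (P Q : α → Prop) [Finite {a // P a}] :
    Nat.card {a // P a} = Nat.card {a // P a ∧ Q a} + Nat.card {a // P a ∧ ¬ Q a} := by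
  classical
  rw [← Nat.card_congr (Equiv.subtypeSubtypeEquivSubtypeInter P Q),
    ← Nat.card_congr (Equiv.subtypeSubtypeEquivSubtypeInter P (fun a => ¬ Q a)),
    ← Nat.card_sum, Nat.card_congr (Equiv.sumCompl (fun t : {a // P a} => Q t.val))]

def swapFun {k : ℕ} (pr : (Fin k → ℕ) × (Fin k → ℕ)) (hE : ∃ j, cross pr.1 pr.2 j) :
    (Fin k → ℕ) × (Fin k → ℕ) :=
  (splice pr.1 pr.2 (Nat.find hE), splice pr.2 pr.1 (Nat.find hE))

lemma swap_mem {k p q : ℕ} (hk : 2 ≤ k) {pr : (Fin k → ℕ) × (Fin k → ℕ)}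
    (hP : Ppred k p q hk pr) (hE : ∃ j, cross pr.1 pr.2 j) :
    Ppred k q p hk (swapFun pr hE) ∧
      (∃ j, cross (swapFun pr hE).1 (swapFun pr hE).2 j) := by
  obtain ⟨⟨hx, hx0, hxl⟩, hy, hy0, hyl⟩ := hP
  have hik : Nat.find hE + 1 < k := find_lt hE
  have hxy : pr.1 ⟨0, by omega⟩ ≤ pr.2 ⟨0, by omega⟩ := by omega
  refine ⟨⟨⟨splice_sm1 hx hy hE hxy, ?_, ?_⟩, splice_sm2 hx hy hE, ?_, ?_⟩,
    ⟨Nat.find hE, splice_cross hy hE⟩⟩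
  · show (splice pr.1 pr.2 (Nat.find hE)) ⟨0, by omega⟩ = 1
    rw [splice_le (show (0 : ℕ) ≤ Nat.find hE from Nat.zero_le _)]
    exact hx0
  · show (splice pr.1 pr.2 (Nat.find hE)) ⟨k - 1, by omega⟩ = q
    rw [splice_gt (show ¬ ((k : ℕ) - 1 ≤ Nat.find hE) by omega)]
    exact hyl
  · show 1 ≤ (splice pr.2 pr.1 (Nat.find hE)) ⟨0, by omega⟩
    rw [splice_le (show (0 : ℕ) ≤ Nat.find hE from Nat.zero_le _)]
    exact hy0
  · show (splice pr.2 pr.1 (Nat.find hE)) ⟨k - 1, by omega⟩ = p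
    rw [splice_gt (show ¬ ((k : ℕ) - 1 ≤ Nat.find hE) by omega)]
    exact hxl

lemma swap_swap {k : ℕ} {pr : (Fin k → ℕ) × (Fin k → ℕ)} (hy : StrictMono pr.2)
    (hE : ∃ j, cross pr.1 pr.2 j)
    (hE2 : ∃ j, cross (swapFun pr hE).1 (swapFun pr hE).2 j) :
    swapFun (swapFun pr hE) hE2 = pr := by
  have hfind : Nat.find hE2 = Nat.find hE := splice_find_eq hy hE hE2
  rw [swapFun, hfind]
  unfold swapFun
  exact Prod.ext (splice_splice1 hE) (splice_splice2 hE)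

lemma always_cross {k m n : ℕ} (hk : 2 ≤ k) (hmn : m < n)
    {pr : (Fin k → ℕ) × (Fin k → ℕ)} (hP : Ppred k n m hk pr) :
    ∃ j, cross pr.1 pr.2 j := by
  obtain ⟨⟨hx, hx0, hxl⟩, hy, hy0, hyl⟩ := hP
  refine ⟨k - 2, ?_⟩
  rw [cross_iff (by omega)]
  have h1 : pr.2 ⟨k - 2, by omega⟩ ≤ pr.2 ⟨k - 1, by omega⟩ :=
    hy.monotone (Fin.mk_le_mk.mpr (by omega))
  have h2 : pr.1 ⟨k - 2 + 1, by omega⟩ = pr.1 ⟨k - 1, by omega⟩ :=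
    congrArg pr.1 (Fin.ext (show k - 2 + 1 = k - 1 by omega))
  omega

lemma card_bad {k m n : ℕ} (hk : 2 ≤ k) (hmn : m < n) :
    Nat.card {pr : (Fin k → ℕ) × (Fin k → ℕ) //
        Ppred k m n hk pr ∧ ∃ j, cross pr.1 pr.2 j}
      = Nat.card {pr : (Fin k → ℕ) × (Fin k → ℕ) // Ppred k n m hk pr} := by
  apply Nat.card_congr
  refine
    { toFun := fun t => ⟨swapFun t.1 t.2.2, (swap_mem hk t.2.1 t.2.2).1⟩
      invFun := fun t => ⟨swapFun t.1 (always_cross hk hmn t.2),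
        (swap_mem hk t.2 (always_cross hk hmn t.2)).1,
        (swap_mem hk t.2 (always_cross hk hmn t.2)).2⟩
      left_inv := ?_, right_inv := ?_ }
  · rintro ⟨pr, hP, hE⟩
    exact Subtype.ext (swap_swap hP.2.1 hE _)
  · rintro ⟨pr, hP⟩
    exact Subtype.ext (swap_swap hP.2.1 _ _)

end ICGaux


open ICGaux

set_option maxHeartbeats 2000000

/-- for `k ≥ 2` and `k ≤ m ≤ n-1`, the number of connected interval-clique
graphs on `{1,...,n}` with `k` maximal cliques whose last maximal clique is `[m:n]`
(such graphs being determined by their maximal-clique endpoint sequences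
`1 = a_1 < ... < a_k ≤ n`, `1 ≤ b_1 < ... < b_k = n`, with the overlap condition
`a_{i+1} ≤ b_i`, and `a_k = m`, `b_k = n`) equals
`C(n-1,k-1)·C(m-2,k-2) − C(n-2,k-2)·C(m-1,k-1)`. -/
theorem card_connected_intervalClique_last_clique_fixed (n m k : ℕ) (hk : 2 ≤ k)
    (hm : k ≤ m) (hn : m ≤ n - 1) :
    Nat.card {p : (Fin k → ℕ) × (Fin k → ℕ) //
        StrictMono p.1 ∧ StrictMono p.2 ∧
        p.1 ⟨0, by omega⟩ = 1 ∧ (∀ i, p.1 i ≤ n) ∧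
        1 ≤ p.2 ⟨0, by omega⟩ ∧ p.2 ⟨k - 1, by omega⟩ = n ∧
        (∀ i : Fin k, ∀ h : i.val + 1 < k, p.1 ⟨i.val + 1, h⟩ ≤ p.2 i) ∧
        p.1 ⟨k - 1, by omega⟩ = m}
      = (n - 1).choose (k - 1) * (m - 2).choose (k - 2)
        - (n - 2).choose (k - 2) * (m - 1).choose (k - 1) := by
  classical
  have hmn : m < n := by omega
  have hm2 : 2 ≤ m := by omega
  have hn1 : 1 ≤ n := by omega
  have hn2 : 2 ≤ n := by omega
  have hm1 : 1 ≤ m := by omega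
  have hiff : ∀ pr : (Fin k → ℕ) × (Fin k → ℕ),
      (StrictMono pr.1 ∧ StrictMono pr.2 ∧
        pr.1 ⟨0, by omega⟩ = 1 ∧ (∀ i, pr.1 i ≤ n) ∧
        1 ≤ pr.2 ⟨0, by omega⟩ ∧ pr.2 ⟨k - 1, by omega⟩ = n ∧
        (∀ i : Fin k, ∀ h : i.val + 1 < k, pr.1 ⟨i.val + 1, h⟩ ≤ pr.2 i) ∧
        pr.1 ⟨k - 1, by omega⟩ = m)
      ↔ (Ppred k m n hk pr ∧ ¬ ∃ j, cross pr.1 pr.2 j) := by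
    intro pr
    constructor
    · rintro ⟨h1, h2, h3, h4, h5, h6, h7, h8⟩
      refine ⟨⟨⟨h1, h3, h8⟩, h2, h5, h6⟩, ?_⟩
      rintro ⟨j, hc⟩
      have hjk : j + 1 < k := cross_lt hc
      rw [cross_iff hjk] at hc
      have h77 : pr.1 ⟨j + 1, hjk⟩ ≤ pr.2 ⟨j, by omega⟩ := h7 ⟨j, by omega⟩ hjk
      omega
    · rintro ⟨⟨⟨h1, h3, h8⟩, h2, h5, h6⟩, hnc⟩
      refine ⟨h1, h2, h3, ?_, h5, h6, ?_, h8⟩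
      · intro i
        have hle : pr.1 i ≤ pr.1 ⟨k - 1, by omega⟩ :=
          h1.monotone (show (i : ℕ) ≤ k - 1 by omega)
        omega
      · intro i h
        by_contra hlt
        push_neg at hlt
        refine hnc ⟨(i : ℕ), (cross_iff h).mpr ?_⟩
        have he : pr.2 ⟨(i : ℕ), by omega⟩ = pr.2 i := congrArg pr.2 (Fin.ext rfl)
        omega
  have hfin : Finite {pr : (Fin k → ℕ) × (Fin k → ℕ) // Ppred k m n hk pr} := by
    apply finite_pairs k n
    rintro pr ⟨⟨hx, hx0, hxl⟩, hy, hy0, hyl⟩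
    constructor
    · intro i
      have hle : pr.1 i ≤ pr.1 ⟨k - 1, by omega⟩ :=
        hx.monotone (show (i : ℕ) ≤ k - 1 by omega)
      omega
    · intro i
      have hle : pr.2 i ≤ pr.2 ⟨k - 1, by omega⟩ :=
        hy.monotone (show (i : ℕ) ≤ k - 1 by omega)
      omega
  have hT := cardPair k m n hk hm2 hn1
  have hB2 := cardPair k n m hk hn2 hm1
  have hB1 := card_bad (m := m) (n := n) hk hmn
  have hsplit := split2 (Ppred k m n hk) (fun pr => ∃ j, cross pr.1 pr.2 j)
  calc Nat.card {p : (Fin k → ℕ) × (Fin k → ℕ) //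
        StrictMono p.1 ∧ StrictMono p.2 ∧
        p.1 ⟨0, by omega⟩ = 1 ∧ (∀ i, p.1 i ≤ n) ∧
        1 ≤ p.2 ⟨0, by omega⟩ ∧ p.2 ⟨k - 1, by omega⟩ = n ∧
        (∀ i : Fin k, ∀ h : i.val + 1 < k, p.1 ⟨i.val + 1, h⟩ ≤ p.2 i) ∧
        p.1 ⟨k - 1, by omega⟩ = m}
      = Nat.card {pr : (Fin k → ℕ) × (Fin k → ℕ) //
          Ppred k m n hk pr ∧ ¬ ∃ j, cross pr.1 pr.2 j} :=
        Nat.card_congr (Equiv.subtypeEquivRight hiff)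
    _ = Nat.card {pr : (Fin k → ℕ) × (Fin k → ℕ) // Ppred k m n hk pr}
        - Nat.card {pr : (Fin k → ℕ) × (Fin k → ℕ) //
            Ppred k m n hk pr ∧ ∃ j, cross pr.1 pr.2 j} :=
        Nat.eq_sub_of_add_eq (by rw [Nat.add_comm]; exact hsplit.symm)
    _ = (m - 2).choose (k - 2) * ((n - 1).choose (k - 1))
        - (n - 2).choose (k - 2) * ((m - 1).choose (k - 1)) := by
        rw [hT, hB1, hB2]
    _ = (n - 1).choose (k - 1) * (m - 2).choose (k - 2)
        - (n - 2).choose (k - 2) * (m - 1).choose (k - 1) := by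
        rw [Nat.mul_comm ((m - 2).choose (k - 2))]
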